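/- For any prime p ≥ 5, any even integer n with n not congruent to 0 modulo p-1, and any integer r ≥ 0, the sum of 1/k^n over all integers k with 1 ≤ k ≤ (p^r - 1)/2 and p not dividing k is congruent to 0 modulo p^r (as a congruence of p-adic integers, or equivalently the numerator of the rational sum is divisible by p^r). -/

import Mathlib

open Finset

private lemma units_sum_zpow_eq_zero (N : ℕ) [NeZero N] (m : ℤ) (c : (ZMod N)ˣ)
    (hc : IsUnit (((c ^ m : (ZMod N)ˣ) : ZMod N) - 1)) :
    ∑ u : (ZMod N)ˣ, ((u ^ m : (ZMod N)ˣ) : ZMod N) = 0 := by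
  set S := ∑ u : (ZMod N)ˣ, ((u ^ m : (ZMod N)ˣ) : ZMod N) with hS
  have h1 : S = ∑ u : (ZMod N)ˣ, (((c * u) ^ m : (ZMod N)ˣ) : ZMod N) :=
    Fintype.sum_bijective (c⁻¹ * ·) (Group.mulLeft_bijective c⁻¹) _ _
      (fun u => by rw [mul_inv_cancel_left])
  have h2 : S = ((c ^ m : (ZMod N)ˣ) : ZMod N) * S := by
    calc S = ∑ u : (ZMod N)ˣ, (((c * u) ^ m : (ZMod N)ˣ) : ZMod N) := h1
    _ = ∑ u : (ZMod N)ˣ, ((c ^ m : (ZMod N)ˣ) : ZMod N) * ((u ^ m : (ZMod N)ˣ) : ZMod N) :=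
        Finset.sum_congr rfl (fun u _ => by rw [mul_zpow, Units.val_mul])
    _ = ((c ^ m : (ZMod N)ˣ) : ZMod N) * S := (Finset.mul_sum _ _ _).symm
  have h3 : (((c ^ m : (ZMod N)ˣ) : ZMod N) - 1) * S
      = (((c ^ m : (ZMod N)ˣ) : ZMod N) - 1) * 0 := by
    rw [mul_zero, sub_mul, one_mul, sub_eq_zero]
    exact h2.symm
  exact hc.mul_left_cancel h3

theorem powersum_inv_mod (p : ℕ) (hp : p.Prime) (hp5 : 5 ≤ p) (n : ℤ) (hne : Even n)
    (hn : ¬ ((p : ℤ) - 1) ∣ n) (r : ℕ) :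
    ∑ k ∈ (Finset.Icc 1 ((p ^ r - 1) / 2)).filter (fun k => ¬ p ∣ k),
      (if 0 ≤ n then ((k : ZMod (p ^ r))⁻¹) ^ n.toNat
        else ((k : ZMod (p ^ r))) ^ (-n).toNat) = 0 := by
  rcases Nat.eq_zero_or_pos r with hr | hr
  · subst hr; simp; rfl
  haveI : Fact p.Prime := ⟨hp⟩
  haveI : NeZero (p ^ r) := ⟨pow_ne_zero r hp.pos.ne'⟩
  haveI : Fact (1 < p ^ r) := ⟨by
    calc 1 < p := hp.one_lt
    _ ≤ p ^ r := Nat.le_self_pow hr.ne' p⟩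
  set N := p ^ r with hN
  have hpN : p ≤ N := Nat.le_self_pow hr.ne' p
  have hN5 : 5 ≤ N := le_trans hp5 hpN
  have hNodd : Odd N := (hp.odd_of_ne_two (by omega)).pow
  have hpdvdN : p ∣ N := dvd_pow_self p hr.ne'
  set m : ℤ := -n with hm
  have hme : Even m := hne.neg
  have hcop : ∀ k : ℕ, ¬ p ∣ k → Nat.Coprime k N :=
    fun k hk => ((hp.coprime_iff_not_dvd.mpr hk).symm).pow_right r
  -- key: the summand as a unit power
  have key : ∀ u : (ZMod N)ˣ,
      (if 0 ≤ n then ((u : ZMod N)⁻¹) ^ n.toNat else ((u : ZMod N)) ^ (-n).toNat)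
        = ((u ^ m : (ZMod N)ˣ) : ZMod N) := by
    intro u
    split_ifs with h
    · rw [ZMod.inv_coe_unit, ← Units.val_pow_eq_pow_val]
      congr 1
      rw [hm, zpow_neg, inv_pow, ← zpow_natCast, Int.toNat_of_nonneg h]
    · rw [← Units.val_pow_eq_pow_val]
      congr 1
      rw [hm, ← zpow_natCast, Int.toNat_of_nonneg (by omega)]
  -- an element of ZMod N reducing to a nonzero element of ZMod p is a unit
  have unit_of_red : ∀ x : ZMod N, (ZMod.castHom hpdvdN (ZMod p)) x ≠ 0 → IsUnit x := by
    intro x hx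
    have hv : ((x.val : ℕ) : ZMod p) ≠ 0 := by
      rwa [ZMod.natCast_val, ← ZMod.castHom_apply (h := hpdvdN)]
    rw [Ne, ZMod.natCast_eq_zero_iff] at hv
    have : IsUnit ((x.val : ℕ) : ZMod N) := (ZMod.isUnit_iff_coprime _ _).mpr (hcop _ hv)
    rwa [ZMod.natCast_val, ZMod.cast_id] at this
  -- choose a unit c with c ^ m not congruent to 1 mod p
  obtain ⟨g, hg⟩ := IsCyclic.exists_generator (α := (ZMod p)ˣ)
  have hordg : orderOf g = p - 1 := by
    rw [orderOf_eq_card_of_forall_mem_zpowers hg, Nat.card_eq_fintype_card,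
      ZMod.card_units_eq_totient, Nat.totient_prime hp]
  have hgm : g ^ m ≠ 1 := by
    intro hgm1
    rw [← orderOf_dvd_iff_zpow_eq_one, hordg] at hgm1
    apply hn
    have hcast : ((p - 1 : ℕ) : ℤ) = (p : ℤ) - 1 := by
      rw [Nat.cast_sub (by omega)]; norm_num
    rw [hm, Int.dvd_neg, hcast] at hgm1
    exact hgm1
  obtain ⟨c, hc⟩ := ZMod.unitsMap_surjective hpdvdN g
  have hcunit : IsUnit (((c ^ m : (ZMod N)ˣ) : ZMod N) - 1) := by
    apply unit_of_red
    rw [map_sub, map_one, sub_ne_zero]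
    intro heq
    apply hgm
    have h2 : ((ZMod.unitsMap hpdvdN (c ^ m) : (ZMod p)ˣ) : ZMod p) = 1 := by
      rw [ZMod.unitsMap_def, Units.coe_map]
      exact heq
    rw [map_zpow, hc] at h2
    exact Units.ext (by rw [h2, Units.val_one])
  have hfull : ∑ u : (ZMod N)ˣ, ((u ^ m : (ZMod N)ˣ) : ZMod N) = 0 :=
    units_sum_zpow_eq_zero N m c hcunit
  set f : ℕ → ZMod N := fun k =>
    (if 0 ≤ n then ((k : ZMod N)⁻¹) ^ n.toNat else ((k : ZMod N)) ^ (-n).toNat) with hf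
  have hfu : ∀ (k : ℕ) (hk : ¬ p ∣ k),
      f k = ((ZMod.unitOfCoprime k (hcop k hk) ^ m : (ZMod N)ˣ) : ZMod N) := by
    intro k hk
    have := key (ZMod.unitOfCoprime k (hcop k hk))
    rwa [ZMod.coe_unitOfCoprime] at this
  -- sum over all of [1, N-1] coprime to p equals the unit sum
  have hbig : ∑ k ∈ (Finset.Icc 1 (N - 1)).filter (fun k => ¬ p ∣ k), f k = 0 := by
    rw [← hfull]
    refine Finset.sum_bij'
      (i := fun k hk => ZMod.unitOfCoprime k (hcop k (Finset.mem_filter.mp hk).2))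
      (j := fun u _ => (u : ZMod N).val) ?_ ?_ ?_ ?_ ?_
    · intro a ha; exact Finset.mem_univ _
    · intro u _
      have h1 : (u : ZMod N).val < N := ZMod.val_lt _
      have h2 : (u : ZMod N).val ≠ 0 := by
        rw [Ne, ZMod.val_eq_zero]
        exact u.ne_zero
      have h3 : ¬ p ∣ (u : ZMod N).val := by
        intro hdvd
        have hco := ZMod.val_coe_unit_coprime u
        have hd1 : p ∣ Nat.gcd (u : ZMod N).val N := Nat.dvd_gcd hdvd hpdvdN
        rw [Nat.Coprime] at hco
        rw [hco] at hd1
        exact hp.ne_one (Nat.dvd_one.mp hd1)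
      rw [Finset.mem_filter, Finset.mem_Icc]
      exact ⟨⟨Nat.one_le_iff_ne_zero.mpr h2, by omega⟩, h3⟩
    · intro k hk
      have hk' := (Finset.mem_filter.mp hk).1
      rw [Finset.mem_Icc] at hk'
      simp only [ZMod.coe_unitOfCoprime]
      exact ZMod.val_natCast_of_lt (by omega)
    · intro u _
      apply Units.ext
      simp [ZMod.coe_unitOfCoprime, ZMod.natCast_val, ZMod.cast_id]
    · intro k hk
      exact hfu k (Finset.mem_filter.mp hk).2
  -- pairing k ↔ N - k
  set M := (N - 1) / 2 with hM
  have hNM : N = 2 * M + 1 := by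
    obtain ⟨t, ht⟩ := hNodd
    omega
  have hsplit : Finset.Icc 1 (N - 1) = Finset.Icc 1 M ∪ Finset.Icc (M + 1) (N - 1) := by
    ext k
    simp only [Finset.mem_Icc, Finset.mem_union]
    omega
  have hdisj : Disjoint ((Finset.Icc 1 M).filter (fun k => ¬ p ∣ k))
      ((Finset.Icc (M + 1) (N - 1)).filter (fun k => ¬ p ∣ k)) := by
    apply Finset.disjoint_filter_filter
    rw [Finset.disjoint_left]
    intro a ha hb
    rw [Finset.mem_Icc] at ha hb
    omega
  have hrefl : ∑ k ∈ (Finset.Icc (M + 1) (N - 1)).filter (fun k => ¬ p ∣ k), f k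
      = ∑ k ∈ (Finset.Icc 1 M).filter (fun k => ¬ p ∣ k), f k := by
    refine Finset.sum_bij' (i := fun k _ => N - k) (j := fun k _ => N - k) ?_ ?_ ?_ ?_ ?_
    · intro a ha
      rw [Finset.mem_filter, Finset.mem_Icc] at ha ⊢
      obtain ⟨⟨h1, h2⟩, h3⟩ := ha
      refine ⟨⟨by omega, by omega⟩, ?_⟩
      intro hdvd
      have ha' : N - (N - a) = a := by omega
      exact h3 (ha' ▸ Nat.dvd_sub hpdvdN hdvd)
    · intro a ha
      rw [Finset.mem_filter, Finset.mem_Icc] at ha ⊢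
      obtain ⟨⟨h1, h2⟩, h3⟩ := ha
      refine ⟨⟨by omega, by omega⟩, ?_⟩
      intro hdvd
      have ha' : N - (N - a) = a := by omega
      exact h3 (ha' ▸ Nat.dvd_sub hpdvdN hdvd)
    · intro a ha
      rw [Finset.mem_filter, Finset.mem_Icc] at ha
      omega
    · intro a ha
      rw [Finset.mem_filter, Finset.mem_Icc] at ha
      omega
    · intro k hk
      rw [Finset.mem_filter, Finset.mem_Icc] at hk
      obtain ⟨⟨h1, h2⟩, h3⟩ := hk
      have h3' : ¬ p ∣ (N - k) := by
        intro hdvd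
        have ha' : N - (N - k) = k := by omega
        exact h3 (ha' ▸ Nat.dvd_sub hpdvdN hdvd)
      rw [hfu k h3, hfu (N - k) h3']
      have hcastk : ((N - k : ℕ) : ZMod N) = -(k : ZMod N) := by
        rw [Nat.cast_sub (by omega), ZMod.natCast_self, zero_sub]
      have huneg : ZMod.unitOfCoprime (N - k) (hcop _ h3')
          = - ZMod.unitOfCoprime k (hcop k h3) := by
        apply Units.ext
        rw [ZMod.coe_unitOfCoprime, hcastk, Units.val_neg, ZMod.coe_unitOfCoprime]
      rw [huneg, hme.neg_zpow]
  have h2S : (2 : ZMod N) * (∑ k ∈ (Finset.Icc 1 M).filter (fun k => ¬ p ∣ k), f k) = 0 := by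
    rw [← hbig, hsplit, Finset.filter_union, Finset.sum_union hdisj, hrefl, two_mul]
  have h2unit : IsUnit (2 : ZMod N) := by
    have : IsUnit ((2 : ℕ) : ZMod N) :=
      (ZMod.isUnit_iff_coprime 2 N).mpr (Nat.coprime_two_left.mpr hNodd)
    simpa using this
  exact h2unit.mul_left_cancel (by rw [h2S, mul_zero])
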